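/- Let A ⊆ ℤ be a finite nonempty set and let g : ℤ → ℤ/2ℤ. Say g is 0-stable with respect to A if Σ_{x ∈ A+p} g(x) = 0 for every p ∈ ℤ. Define f_k as in the recursion f_0 ≡ 1, f_k(0) = 1, f_k(t) = f_k(t−1) + f_{k−1}(t−1). If f_{k−1} is 0-stable with respect to A, then f_k is stable with respect to A, i.e., the value Σ_{x ∈ A+p} f_k(x) ∈ ℤ/2ℤ is independent of p ∈ ℤ. -/

import Mathlib

theorem f_stable_of_prev_zero_stable (f : ℕ → ℤ → ZMod 2)
    (h0 : ∀ t : ℤ, f 0 t = 1)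
    (hb : ∀ k : ℕ, f (k + 1) 0 = 1)
    (hr : ∀ (k : ℕ) (t : ℤ), f (k + 1) t = f (k + 1) (t - 1) + f k (t - 1))
    (A : Finset ℤ) (hA : A.Nonempty) (k : ℕ)
    (hstab : ∀ p : ℤ, ∑ x ∈ A, f k (x + p) = 0) :
    ∀ p q : ℤ, ∑ x ∈ A, f (k + 1) (x + p) = ∑ x ∈ A, f (k + 1) (x + q) := by
  have key : ∀ p : ℤ, ∑ x ∈ A, f (k + 1) (x + p) = ∑ x ∈ A, f (k + 1) (x + (p - 1)) := by
    intro p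
    have : ∑ x ∈ A, f (k + 1) (x + p)
        = ∑ x ∈ A, (f (k + 1) (x + p - 1) + f k (x + p - 1)) := by
      exact Finset.sum_congr rfl (fun x _ => hr k (x + p))
    rw [this, Finset.sum_add_distrib]
    have h1 : ∑ x ∈ A, f k (x + p - 1) = 0 := by
      have := hstab (p - 1)
      simpa [add_sub_assoc] using this
    have h2 : ∀ x ∈ A, f (k + 1) (x + p - 1) = f (k + 1) (x + (p - 1)) := by
      intro x _; ring_nf
    rw [h1, Finset.sum_congr rfl h2, add_zero]
  have const : ∀ p : ℤ, ∑ x ∈ A, f (k + 1) (x + p) = ∑ x ∈ A, f (k + 1) (x + 0) := by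
    intro p
    induction p using Int.induction_on with
    | zero => rfl
    | succ n ih =>
        have h := key ((n : ℤ) + 1)
        simp only [add_sub_cancel_right] at h
        exact h.trans ih
    | pred n ih =>
        have h := key (-(n : ℤ))
        exact h.symm.trans ih
  intro p q
  rw [const p, const q]
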